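/- arXiv:0812.2698 — 2 statements merged into one kernel-verified Lean document; each statement's English description precedes it below -/
import Mathlib

section
/- An ortholattice satisfying the condition (a ≡ b = 1 implies a = b), where a ≡ b := (a∩b)∪(a'∩b'), is orthomodular, i.e., satisfies a ∪ (a' ∩ (a∪b)) = a ∪ b for all a, b. -/
/-- An ortholattice as an algebra ⟨α, ', ∪, ∩⟩ with join `j` and
orthocomplement `c` primitive, and meet defined by De Morgan. -/
structure OrthoLattice (α : Type*) where
  j : α → α → α
  c : α → α
  j_comm : ∀ a b, j a b = j b a
  j_assoc : ∀ a b d, j (j a b) d = j a (j b d)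
  c_invol : ∀ a, c (c a) = a
  j_top : ∀ a b, j a (j b (c b)) = j b (c b)
  absorb : ∀ a b, j a (c (j (c a) (c b))) = a

namespace OrthoLattice

variable {α : Type*}

/-- meet: a ∩ b = (a' ∪ b')' -/
def m (L : OrthoLattice α) (a b : α) : α := L.c (L.j (L.c a) (L.c b))

/-- the unit 1 = a ∪ a' -/
def one (L : OrthoLattice α) (a : α) : α := L.j a (L.c a)

/-- quantum equivalence a ≡ b = (a∩b) ∪ (a'∩b') -/
def equiv (L : OrthoLattice α) (a b : α) : α := L.j (L.m a b) (L.m (L.c a) (L.c b))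

/-- classical equivalence a ≡₀ b = (a'∪b) ∩ (a∪b') -/
def equiv0 (L : OrthoLattice α) (a b : α) : α := L.m (L.j (L.c a) b) (L.j a (L.c b))

/-- Sasaki hook a →₁ b = a' ∪ (a ∩ b) -/
def sasaki (L : OrthoLattice α) (a b : α) : α := L.j (L.c a) (L.m a b)

end OrthoLattice

namespace OrthoLattice

variable {α : Type*} (L : OrthoLattice α)

lemma dm2 (a b : α) : L.c (L.m a b) = L.j (L.c a) (L.c b) := by
  simp [m, c_invol]

lemma m_comm (a b : α) : L.m a b = L.m b a := by
  simp [m, j_comm]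

lemma absorb_j (a b : α) : L.j a (L.m a b) = a := L.absorb a b

lemma absorb_m (a b : α) : L.m a (L.j a b) = a := by
  have h := L.absorb (L.c a) (L.c b)
  rw [L.c_invol, L.c_invol] at h
  show L.c (L.j (L.c a) (L.c (L.j a b))) = a
  rw [h, L.c_invol]

lemma j_idem (a : α) : L.j a a = a := by
  have h1 := L.absorb_m a a
  have h2 := L.absorb_j a (L.j a a)
  rw [h1] at h2
  exact h2

lemma one_eq (a b : α) : L.one a = L.one b := by
  have h1 := L.j_top (L.j a (L.c a)) b
  have h2 := L.j_top (L.j b (L.c b)) a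
  show L.j a (L.c a) = L.j b (L.c b)
  calc L.j a (L.c a) = L.j (L.j b (L.c b)) (L.j a (L.c a)) := h2.symm
  _ = L.j (L.j a (L.c a)) (L.j b (L.c b)) := L.j_comm _ _
  _ = L.j b (L.c b) := h1

lemma j_self_j (a b : α) : L.j a (L.j a b) = L.j a b := by
  rw [← L.j_assoc, L.j_idem]

theorem stmt2' (h : ∀ a b : α, L.equiv a b = L.one a → a = b) :
    ∀ a b : α, L.j a (L.m (L.c a) (L.j a b)) = L.j a b := by
  intro a b
  set v := L.j a b with hv
  set w := L.m (L.c a) v with hw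
  set u := L.j a w with hu
  -- u ∪ v = v
  have huv : L.j u v = v := by
    calc L.j u v = L.j a (L.j w v) := L.j_assoc a w v
    _ = L.j a (L.j v w) := by rw [L.j_comm w v]
    _ = L.j (L.j a v) w := (L.j_assoc a v w).symm
    _ = L.j v w := by rw [hv, L.j_self_j]
    _ = L.j v (L.m v (L.c a)) := by rw [hw, L.m_comm]
    _ = v := L.absorb_j v (L.c a)
  -- u ∩ v = u
  have hmu : L.m u v = u := by
    have h1 := L.absorb_m u v
    rw [huv] at h1
    exact h1
  -- u' ∩ v' = v'
  have hmv : L.m (L.c u) (L.c v) = L.c v := by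
    have hj : L.j (L.c u) (L.c v) = L.c u := by
      have := congrArg L.c hmu
      rw [L.dm2] at this
      exact this
    have h1 := L.absorb_m (L.c v) (L.c u)
    rw [L.j_comm (L.c v) (L.c u), hj] at h1
    rw [L.m_comm]
    exact h1
  -- w' = a ∪ v'
  have hcw : L.c w = L.j a (L.c v) := by
    rw [hw, L.dm2, L.c_invol]
  -- equiv u v = one u
  have key : L.equiv u v = L.one u := by
    show L.j (L.m u v) (L.m (L.c u) (L.c v)) = L.one u
    rw [hmu, hmv]
    calc L.j u (L.c v) = L.j a (L.j w (L.c v)) := L.j_assoc a w (L.c v)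
    _ = L.j (L.j w (L.c v)) a := L.j_comm _ _
    _ = L.j w (L.j (L.c v) a) := L.j_assoc _ _ _
    _ = L.j w (L.j a (L.c v)) := by rw [L.j_comm (L.c v) a]
    _ = L.j w (L.c w) := by rw [hcw]
    _ = L.one u := L.one_eq w u
  exact h u v key

end OrthoLattice

/-- an ortholattice with (a ≡ b = 1 ⟹ a = b) is orthomodular. -/
theorem stmt2 {α : Type*} (L : OrthoLattice α)
    (h : ∀ a b : α, L.equiv a b = L.one a → a = b) :
    ∀ a b : α, L.j a (L.m (L.c a) (L.j a b)) = L.j a b := L.stmt2' h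
end

section
/- An ortholattice satisfying the condition (a →₀ b = 1 ⟺ a ≤ b), where a →₀ b := a' ∪ b, is distributive, i.e., is a Boolean algebra. -/
section Aux

variable {α : Type*} (L : OrthoLattice α)

instance : Std.Commutative L.j := ⟨L.j_comm⟩
instance : Std.Associative L.j := ⟨L.j_assoc⟩

lemma olt_m_comm (a b : α) : L.m a b = L.m b a := by
  unfold OrthoLattice.m; rw [L.j_comm]

lemma olt_m_assoc (a b d : α) : L.m (L.m a b) d = L.m a (L.m b d) := by
  unfold OrthoLattice.m; rw [L.c_invol, L.c_invol, L.j_assoc]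

instance : Std.Commutative L.m := ⟨olt_m_comm L⟩
instance : Std.Associative L.m := ⟨olt_m_assoc L⟩

lemma olt_c_j (a b : α) : L.c (L.j a b) = L.m (L.c a) (L.c b) := by
  unfold OrthoLattice.m; rw [L.c_invol, L.c_invol]

lemma olt_c_m (a b : α) : L.c (L.m a b) = L.j (L.c a) (L.c b) := by
  unfold OrthoLattice.m; rw [L.c_invol]

lemma olt_jm_absorb (a b : α) : L.j a (L.m a b) = a := L.absorb a b

lemma olt_mj_absorb (a b : α) : L.m a (L.j a b) = a := by
  unfold OrthoLattice.m
  rw [show L.c (L.j a b) = L.m (L.c a) (L.c b) from by rw [olt_c_j],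
    olt_jm_absorb, L.c_invol]

lemma olt_j_idem (a : α) : L.j a a = a := by
  have h1 := olt_jm_absorb L a (L.j a a)
  rwa [olt_mj_absorb] at h1

lemma olt_m_idem (a : α) : L.m a a = a := by
  unfold OrthoLattice.m; rw [olt_j_idem, L.c_invol]

lemma olt_one_eq (a b : α) : L.one a = L.one b := by
  have h1 : L.j (L.one a) (L.one b) = L.one b := L.j_top (L.one a) b
  have h2 : L.j (L.one b) (L.one a) = L.one a := L.j_top (L.one b) a
  rw [L.j_comm] at h2
  rw [← h1, h2]

lemma olt_m_compl (a : α) : L.m a (L.c a) = L.c (L.one a) := by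
  unfold OrthoLattice.one
  rw [olt_c_j, olt_m_comm, L.c_invol]

lemma olt_zero_eq (a b : α) : L.m a (L.c a) = L.m b (L.c b) := by
  rw [olt_m_compl, olt_m_compl, olt_one_eq L a b]

/-- from `m x y = x` conclude `j y x = y` -/
lemma olt_le_absorb {x y : α} (hxy : L.m x y = x) : L.j y x = y := by
  rw [← hxy, olt_m_comm]; exact olt_jm_absorb L y x

end Aux

section Key

variable {α : Type*} (L : OrthoLattice α)
  (h : ∀ a b : α, L.j (L.c a) b = L.one a ↔ L.m a b = a)

include h

/-- the key orthomodular-style identity: a ∪ (a' ∩ b) = a ∪ b -/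
lemma olt_key1 (a b : α) : L.j a (L.m (L.c a) b) = L.j a b := by
  have hcw : L.c (L.j a (L.c b)) = L.m (L.c a) b := by
    rw [olt_c_j, L.c_invol]
  -- b ≤ v where v := j a (m (c a) b)
  have h1 : L.j (L.c b) (L.j a (L.m (L.c a) b)) = L.one b := by
    rw [← hcw, ← L.j_assoc, L.j_comm (L.c b) a]
    exact olt_one_eq L (L.j a (L.c b)) b
  have hbv : L.m b (L.j a (L.m (L.c a) b)) = b := (h b _).mp h1
  have hvb : L.j (L.j a (L.m (L.c a) b)) b = L.j a (L.m (L.c a) b) :=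
    olt_le_absorb L hbv
  -- a ≤ v
  have hav : L.j a (L.j a (L.m (L.c a) b)) = L.j a (L.m (L.c a) b) := by
    rw [← L.j_assoc, olt_j_idem]
  have hjbv : L.j b (L.j a (L.m (L.c a) b)) = L.j a (L.m (L.c a) b) := by
    rw [L.j_comm]; exact hvb
  -- (ii): j (j a b) v = v
  have hii : L.j (L.j a b) (L.j a (L.m (L.c a) b)) = L.j a (L.m (L.c a) b) := by
    rw [L.j_assoc, hjbv, hav]
  -- (i): j v (j a b) = j a b
  have hbx : L.j b (L.m (L.c a) b) = b := by
    rw [olt_m_comm]; exact olt_jm_absorb L b (L.c a)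
  have hi : L.j (L.j a (L.m (L.c a) b)) (L.j a b) = L.j a b := by
    have hac : L.j (L.j a (L.m (L.c a) b)) (L.j a b)
        = L.j (L.j a a) (L.j b (L.m (L.c a) b)) := by ac_rfl
    rw [hac, olt_j_idem, hbx]
  calc L.j a (L.m (L.c a) b) = L.j (L.j a b) (L.j a (L.m (L.c a) b)) := hii.symm
    _ = L.j (L.j a (L.m (L.c a) b)) (L.j a b) := L.j_comm _ _
    _ = L.j a b := hi

/-- the dual: a ∩ (a' ∪ b) = a ∩ b -/
lemma olt_key2 (a b : α) : L.m a (L.j (L.c a) b) = L.m a b := by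
  show L.c (L.j (L.c a) (L.c (L.j (L.c a) b))) = _
  rw [show L.c (L.j (L.c a) b) = L.m a (L.c b) from by rw [olt_c_j, L.c_invol]]
  have h1 := olt_key1 L h (L.c a) (L.c b)
  rw [L.c_invol] at h1
  rw [h1]
  rfl

/-- generalized: if x ≤ a then x ∩ (a' ∪ y) = x ∩ y -/
lemma olt_key2' {x a : α} (y : α) (hxa : L.m x a = x) :
    L.m x (L.j (L.c a) y) = L.m x y := by
  conv_lhs => rw [← hxa]
  rw [olt_m_assoc, olt_key2 L h, ← olt_m_assoc, hxa]

end Key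

/-- an ortholattice satisfying (a →₀ b = 1 ⟺ a ≤ b) is
distributive, i.e. a Boolean algebra. -/
theorem stmt7 {α : Type*} (L : OrthoLattice α)
    (h : ∀ a b : α, L.j (L.c a) b = L.one a ↔ L.m a b = a) :
    ∀ a b d : α, L.m a (L.j b d) = L.j (L.m a b) (L.m a d) := by
  intro a b d
  -- notation: s = b ∪ d, e = (a∩b)∪(a∩d), f = a∩s
  -- e ≤ f
  have hab : L.m (L.m a b) (L.m a (L.j b d)) = L.m a b := by
    have hac : L.m (L.m a b) (L.m a (L.j b d))
        = L.m (L.m (L.m a a) b) (L.j b d) := by ac_rfl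
    rw [hac, olt_m_idem, olt_m_assoc, olt_mj_absorb]
  have had : L.m (L.m a d) (L.m a (L.j b d)) = L.m a d := by
    have hac : L.m (L.m a d) (L.m a (L.j b d))
        = L.m (L.m (L.m a a) d) (L.j b d) := by ac_rfl
    rw [hac, olt_m_idem, olt_m_assoc, L.j_comm, olt_mj_absorb]
  have hef : L.j (L.j (L.m a b) (L.m a d)) (L.m a (L.j b d))
      = L.m a (L.j b d) := by
    rw [L.j_comm, ← L.j_assoc, olt_le_absorb L hab, olt_le_absorb L had]
  -- f = e ∪ (e' ∩ f)
  have hstep : L.j (L.j (L.m a b) (L.m a d))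
      (L.m (L.c (L.j (L.m a b) (L.m a d))) (L.m a (L.j b d)))
      = L.m a (L.j b d) := by
    rw [olt_key1 L h, hef]
  -- f ≤ a
  have hfa : L.m (L.m a (L.j b d)) a = L.m a (L.j b d) := by
    have hac : L.m (L.m a (L.j b d)) a = L.m (L.m a a) (L.j b d) := by ac_rfl
    rw [hac, olt_m_idem]
  -- compute e' ∩ f = e ∩ e' (the zero)
  have hce : L.c (L.j (L.m a b) (L.m a d))
      = L.m (L.j (L.c a) (L.c b)) (L.j (L.c a) (L.c d)) := by
    rw [olt_c_j, olt_c_m, olt_c_m]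
  have hzero : L.m (L.c (L.j (L.m a b) (L.m a d))) (L.m a (L.j b d))
      = L.m (L.j (L.m a b) (L.m a d)) (L.c (L.j (L.m a b) (L.m a d))) := by
    rw [olt_m_comm, hce, ← olt_m_assoc,
      olt_key2' L h _ hfa]
    -- now: m (m f (c b)) (j (c a) (c d)) with f := m a (j b d)
    have hfb : L.m (L.m (L.m a (L.j b d)) (L.c b)) a
        = L.m (L.m a (L.j b d)) (L.c b) := by
      have hac : L.m (L.m (L.m a (L.j b d)) (L.c b)) a
          = L.m (L.m (L.m a a) (L.j b d)) (L.c b) := by ac_rfl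
      rw [hac, olt_m_idem]
    rw [olt_key2' L h _ hfb, olt_m_assoc,
      show L.m (L.c b) (L.c d) = L.c (L.j b d) from (olt_c_j L b d).symm,
      olt_m_assoc, olt_zero_eq L (L.j b d) a, ← olt_m_assoc, olt_m_idem,
      olt_zero_eq L a (L.j (L.m a b) (L.m a d)), hce]
  rw [hzero, olt_jm_absorb] at hstep
  exact hstep.symm
end
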